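/- arXiv:1503.08047 — 4 statements merged into one kernel-verified Lean document; each statement's English description precedes it below -/
import Mathlib

section
/- Let φ = (1+√5)/2 be the golden ratio and n a positive integer. Suppose n = Σ_{k=-R}^{L} ε_k φ^k is the greedy φ-expansion of n with digits ε_k ∈ {0,1}, no two consecutive digits equal to 1, ε_L = 1, and ε_{-R} = 1 (R being the length of the fractional part, with R = 0 if the expansion has no fractional part of that form). Then R = L if L is even and R = L + 1 if L is odd. -/
open goldenRatio Real

section Aux

lemma gold_inv' : goldenRatio⁻¹ = goldenRatio - 1 :=
  inv_eq_of_mul_eq_one_right (by linear_combination goldenRatio_sq)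

lemma goldConj_inv' : goldenConj⁻¹ = goldenConj - 1 :=
  inv_eq_of_mul_eq_one_right (by linear_combination goldenConj_sq)

/-- Conjugation: every integer power of φ is a + bφ with the same a,b giving ψ^k = a + bψ. -/
lemma goldConj_conj_zpow (k : ℤ) : ∃ a b : ℤ,
    goldenRatio ^ k = a + b * goldenRatio ∧ goldenConj ^ k = a + b * goldenConj := by
  induction k using Int.induction_on with
  | zero => exact ⟨1, 0, by norm_num, by norm_num⟩
  | succ n ih =>
      obtain ⟨a, b, h1, h2⟩ := ih
      refine ⟨b, a + b, ?_, ?_⟩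
      · rw [zpow_add_one₀ goldenRatio_ne_zero, h1]
        push_cast
        linear_combination (b : ℝ) * goldenRatio_sq
      · rw [zpow_add_one₀ goldenConj_ne_zero, h2]
        push_cast
        linear_combination (b : ℝ) * goldenConj_sq
  | pred n ih =>
      obtain ⟨a, b, h1, h2⟩ := ih
      refine ⟨b - a, a, ?_, ?_⟩
      · rw [show (-(n:ℤ) - 1) = (-(n:ℤ)) + (-1) by ring, zpow_add₀ goldenRatio_ne_zero, h1,
          zpow_neg_one, gold_inv']
        push_cast
        linear_combination (b : ℝ) * goldenRatio_sq
      · rw [show (-(n:ℤ) - 1) = (-(n:ℤ)) + (-1) by ring, zpow_add₀ goldenConj_ne_zero, h2,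
          zpow_neg_one, goldConj_inv']
        push_cast
        linear_combination (b : ℝ) * goldenConj_sq

lemma gold_fib_zpow (k : ℤ) :
    goldenRatio ^ (k + 2) = goldenRatio ^ (k + 1) + goldenRatio ^ k := by
  have h2 : goldenRatio ^ (k + 2) = goldenRatio ^ k * goldenRatio ^ (2 : ℕ) := by
    rw [← zpow_natCast, ← zpow_add₀ goldenRatio_ne_zero]
    norm_num
  have h1 : goldenRatio ^ (k + 1) = goldenRatio ^ k * goldenRatio := by
    rw [zpow_add_one₀ goldenRatio_ne_zero]
  rw [h2, h1, goldenRatio_sq]; ring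

lemma abs_zpow' (a : ℝ) (k : ℤ) : |a ^ k| = |a| ^ k := by
  rcases k with n | n
  · simp [abs_pow]
  · simp [zpow_negSucc, abs_inv, abs_pow]

lemma abs_goldConj_zpow (k : ℤ) : |goldenConj ^ k| = goldenRatio ^ (-k) := by
  rw [abs_zpow', abs_of_neg goldenConj_neg, ← inv_goldenRatio, inv_zpow, ← zpow_neg]

/-- Key geometric bound: a 0/1 digit sum with no two consecutive ones, top index M,
is strictly below φ^(M+1). -/
lemma sum_pow_lt (ε : ℤ → ℕ) (hdig : ∀ k, ε k ≤ 1)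
    (hnc : ∀ k, ¬(ε k = 1 ∧ ε (k + 1) = 1)) :
    ∀ (N : ℕ) (m M : ℤ), M - m < N →
      ∑ k ∈ Finset.Icc m M, (ε k : ℝ) * goldenRatio ^ k < goldenRatio ^ (M + 1) := by
  intro N
  induction N with
  | zero =>
      intro m M h
      have : Finset.Icc m M = ∅ := by
        apply Finset.Icc_eq_empty; omega
      rw [this]
      simpa using zpow_pos goldenRatio_pos (M + 1)
  | succ N ih =>
      intro m M h
      by_cases hm : m ≤ M
      · have hins : Finset.Icc m M = insert M (Finset.Icc m (M - 1)) := by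
          ext x; simp only [Finset.mem_Icc, Finset.mem_insert]; omega
        have hnotmem : M ∉ Finset.Icc m (M - 1) := by simp only [Finset.mem_Icc]; omega
        rw [hins, Finset.sum_insert hnotmem]
        rcases Nat.le_one_iff_eq_zero_or_eq_one.mp (hdig M) with h0 | h1
        · rw [h0]
          have := ih m (M - 1) (by omega)
          have hmono : goldenRatio ^ (M - 1 + 1) < goldenRatio ^ (M + 1) :=
            zpow_lt_zpow_right₀ one_lt_goldenRatio (by omega)
          push_cast
          linarith
        · -- ε M = 1, so ε (M-1) = 0
          have hM1 : ε (M - 1) = 0 := by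
            have := hnc (M - 1)
            rw [show M - 1 + 1 = M by ring] at this
            rcases Nat.le_one_iff_eq_zero_or_eq_one.mp (hdig (M - 1)) with h' | h'
            · exact h'
            · exact absurd ⟨h', h1⟩ this
          have hsub : ∑ k ∈ Finset.Icc m (M - 1), (ε k : ℝ) * goldenRatio ^ k
              < goldenRatio ^ (M - 1) := by
            by_cases hm1 : m ≤ M - 1
            · have hins2 : Finset.Icc m (M - 1) = insert (M - 1) (Finset.Icc m (M - 2)) := by
                ext x; simp only [Finset.mem_Icc, Finset.mem_insert]; omega
              have hnm2 : (M - 1) ∉ Finset.Icc m (M - 2) := by simp only [Finset.mem_Icc]; omega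
              rw [hins2, Finset.sum_insert hnm2, hM1]
              have := ih m (M - 2) (by omega)
              rw [show M - 2 + 1 = M - 1 by ring] at this
              push_cast
              linarith
            · have : Finset.Icc m (M - 1) = ∅ := by apply Finset.Icc_eq_empty; omega
              rw [this]
              simpa using zpow_pos goldenRatio_pos (M - 1)
          have hfib : goldenRatio ^ (M + 1) = goldenRatio ^ M + goldenRatio ^ (M - 1) := by
            have := gold_fib_zpow (M - 1)
            rw [show M - 1 + 2 = M + 1 by ring, show M - 1 + 1 = M by ring] at this
            exact this
          rw [h1, hfib]
          push_cast
          linarith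
      · have : Finset.Icc m M = ∅ := by apply Finset.Icc_eq_empty; omega
        rw [this]
        simpa using zpow_pos goldenRatio_pos (M + 1)

/-- The mirrored bound for negative powers of φ. -/
lemma sum_pow_neg_lt (ε : ℤ → ℕ) (hdig : ∀ k, ε k ≤ 1)
    (hnc : ∀ k, ¬(ε k = 1 ∧ ε (k + 1) = 1)) (m M : ℤ) :
      ∑ k ∈ Finset.Icc m M, (ε k : ℝ) * goldenRatio ^ (-k) < goldenRatio ^ (-m + 1) := by
  set δ : ℤ → ℕ := fun j => ε (-j) with hδ
  have hdigδ : ∀ j, δ j ≤ 1 := fun j => hdig (-j)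
  have hncδ : ∀ j, ¬(δ j = 1 ∧ δ (j + 1) = 1) := by
    intro j ⟨h1, h2⟩
    apply hnc (-(j + 1))
    refine ⟨h2, ?_⟩
    rw [show -(j + 1) + 1 = -j by ring]; exact h1
  have key := sum_pow_lt δ hdigδ hncδ (max 0 (-m - (-M)) + 1).toNat (-M) (-m) (by
    rcases le_or_gt (-M) (-m) with h | h <;> omega)
  have hre : ∑ k ∈ Finset.Icc m M, (ε k : ℝ) * goldenRatio ^ (-k)
      = ∑ j ∈ Finset.Icc (-M) (-m), (δ j : ℝ) * goldenRatio ^ j := by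
    apply Finset.sum_nbij' (fun k => -k) (fun j => -j)
    · intro a ha; simp only [Finset.mem_Icc] at *; omega
    · intro a ha; simp only [Finset.mem_Icc] at *; omega
    · intro a _; ring
    · intro a _; ring
    · intro a _; simp [hδ]
  rw [hre]
  exact key

/-- Bound on the conjugate sums. -/
lemma abs_sum_conj_lt (ε : ℤ → ℕ) (hdig : ∀ k, ε k ≤ 1)
    (hnc : ∀ k, ¬(ε k = 1 ∧ ε (k + 1) = 1)) (m M : ℤ) :
      |∑ k ∈ Finset.Icc m M, (ε k : ℝ) * goldenConj ^ k| < goldenRatio ^ (-m + 1) := by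
  calc |∑ k ∈ Finset.Icc m M, (ε k : ℝ) * goldenConj ^ k|
      ≤ ∑ k ∈ Finset.Icc m M, |(ε k : ℝ) * goldenConj ^ k| := Finset.abs_sum_le_sum_abs _ _
    _ = ∑ k ∈ Finset.Icc m M, (ε k : ℝ) * goldenRatio ^ (-k) := by
        apply Finset.sum_congr rfl
        intro k _
        rw [abs_mul, abs_goldConj_zpow, abs_of_nonneg (by positivity : (0:ℝ) ≤ (ε k : ℝ))]
    _ < goldenRatio ^ (-m + 1) := sum_pow_neg_lt ε hdig hnc m M

lemma conj_zpow_neg_nat (R : ℕ) : goldenConj ^ (-(R : ℤ)) = (-goldenRatio) ^ R := by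
  rw [zpow_neg, zpow_natCast, ← inv_pow, inv_goldenConj]

end Aux

/-- The golden ratio. -/
noncomputable def goldenφ : ℝ := (1 + Real.sqrt 5) / 2

/-- For the greedy φ-expansion n = Σ_{k=-R}^{L} ε_k φ^k of a positive integer n,
with digits in {0,1}, no two consecutive 1s, leading digit ε_L = 1 and last digit
ε_{-R} = 1 (when R > 0): R = L if L is even and R = L + 1 if L is odd. -/
theorem golden_fractional_length (n : ℕ) (hn : 0 < n) (L R : ℕ) (ε : ℤ → ℕ)
    (hdig : ∀ k, ε k ≤ 1)
    (hsupp : ∀ k, ε k ≠ 0 → -(R : ℤ) ≤ k ∧ k ≤ (L : ℤ))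
    (hnocons : ∀ k, ¬(ε k = 1 ∧ ε (k + 1) = 1))
    (htop : ε (L : ℤ) = 1)
    (hbot : 0 < R → ε (-(R : ℤ)) = 1)
    (hsum : (n : ℝ) = ∑ k ∈ Finset.Icc (-(R : ℤ)) (L : ℤ), (ε k : ℝ) * goldenφ ^ k) :
    (Even L → R = L) ∧ (Odd L → R = L + 1) := by
  have hgold : goldenφ = goldenRatio := rfl
  rw [hgold] at hsum
  -- conjugate the expansion
  choose a b h1 h2 using goldConj_conj_zpow
  have hφsum : ∑ k ∈ Finset.Icc (-(R : ℤ)) (L : ℤ), (ε k : ℝ) * goldenRatio ^ k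
      = ((∑ k ∈ Finset.Icc (-(R : ℤ)) (L : ℤ), (ε k : ℤ) * a k : ℤ) : ℝ)
        + ((∑ k ∈ Finset.Icc (-(R : ℤ)) (L : ℤ), (ε k : ℤ) * b k : ℤ) : ℝ) * goldenRatio := by
    push_cast
    rw [Finset.sum_mul, ← Finset.sum_add_distrib]
    refine Finset.sum_congr rfl fun k _ => ?_
    rw [h1 k]; ring
  have hψsum : ∑ k ∈ Finset.Icc (-(R : ℤ)) (L : ℤ), (ε k : ℝ) * goldenConj ^ k
      = ((∑ k ∈ Finset.Icc (-(R : ℤ)) (L : ℤ), (ε k : ℤ) * a k : ℤ) : ℝ)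
        + ((∑ k ∈ Finset.Icc (-(R : ℤ)) (L : ℤ), (ε k : ℤ) * b k : ℤ) : ℝ) * goldenConj := by
    push_cast
    rw [Finset.sum_mul, ← Finset.sum_add_distrib]
    refine Finset.sum_congr rfl fun k _ => ?_
    rw [h2 k]; ring
  set A : ℤ := ∑ k ∈ Finset.Icc (-(R : ℤ)) (L : ℤ), (ε k : ℤ) * a k with hA
  set B : ℤ := ∑ k ∈ Finset.Icc (-(R : ℤ)) (L : ℤ), (ε k : ℤ) * b k with hB
  have hB0 : B = 0 := by
    by_contra hB0
    have hirr : Irrational ((A : ℝ) + (B : ℝ) * goldenRatio) := by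
      have h := (goldenRatio_irrational.intCast_mul hB0).intCast_add A
      simpa using h
    apply hirr.ne_int (n : ℤ)
    rw [← hφsum, ← hsum]
    push_cast
    rfl
  have hAn : (A : ℝ) = (n : ℝ) := by
    rw [hsum, hφsum, hB0]
    push_cast
    ring
  have hT : (n : ℝ) = ∑ k ∈ Finset.Icc (-(R : ℤ)) (L : ℤ), (ε k : ℝ) * goldenConj ^ k := by
    rw [hψsum, hB0, ← hAn]
    push_cast
    ring
  clear hφsum hψsum hA hB hB0 hAn h1 h2
  -- basic bounds from the φ side
  have hRL : -(R : ℤ) ≤ (L : ℤ) := by omega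
  have hub : (n : ℝ) < goldenRatio ^ ((L : ℤ) + 1) := by
    rw [hsum]
    exact sum_pow_lt ε hdig hnocons (L + R + 1) _ _ (by push_cast; omega)
  have hlb : goldenRatio ^ ((L : ℤ)) ≤ (n : ℝ) := by
    rw [hsum]
    have h := Finset.single_le_sum (f := fun k => (ε k : ℝ) * goldenRatio ^ k)
      (fun i _ => mul_nonneg (Nat.cast_nonneg _) (zpow_pos goldenRatio_pos i).le)
      (Finset.mem_Icc.mpr ⟨hRL, le_refl _⟩)
    simpa [htop] using h
  by_cases hR0 : R = 0
  · -- no fractional part: then n < φ so L = 0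
    subst hR0
    have habs := abs_sum_conj_lt ε hdig hnocons (-((0 : ℕ) : ℤ)) L
    rw [← hT] at habs
    have hub2 : (n : ℝ) < goldenRatio ^ ((0 : ℤ) + 1) := by
      have h := (abs_lt.mp habs).2
      rw [show -(-((0 : ℕ) : ℤ)) + 1 = (0 : ℤ) + 1 by norm_num] at h
      exact h
    have hL0 : L = 0 := by
      by_contra hL
      have hmono : goldenRatio ^ ((0 : ℤ) + 1) ≤ goldenRatio ^ ((L : ℤ)) :=
        zpow_le_zpow_right₀ one_lt_goldenRatio.le (by omega)
      linarith
    subst hL0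
    exact ⟨fun _ => rfl, fun hodd => absurd hodd (by simp [Nat.odd_iff])⟩
  · have hRpos : 0 < R := Nat.pos_of_ne_zero hR0
    have hbR := hbot hRpos
    -- split off the bottom digit
    have hsplit1 : Finset.Icc (-(R : ℤ)) (L : ℤ)
        = insert (-(R : ℤ)) (Finset.Icc (-(R : ℤ) + 1) (L : ℤ)) := by
      ext x; simp only [Finset.mem_Icc, Finset.mem_insert]; omega
    have hnm1 : -(R : ℤ) ∉ Finset.Icc (-(R : ℤ) + 1) (L : ℤ) := by
      simp only [Finset.mem_Icc]; omega
    have hT1 : (n : ℝ) = goldenConj ^ (-(R : ℤ))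
        + ∑ k ∈ Finset.Icc (-(R : ℤ) + 1) (L : ℤ), (ε k : ℝ) * goldenConj ^ k := by
      rw [hT, hsplit1, Finset.sum_insert hnm1, hbR]
      norm_num
    have habs1 := abs_sum_conj_lt ε hdig hnocons (-(R : ℤ) + 1) L
    rw [show -(-(R : ℤ) + 1) + 1 = (R : ℤ) by ring] at habs1
    -- R must be even
    have hRe : Even R := by
      rcases Nat.even_or_odd R with h | h
      · exact h
      · exfalso
        have hψR : goldenConj ^ (-(R : ℤ)) = -(goldenRatio ^ ((R : ℤ))) := by
          rw [conj_zpow_neg_nat, h.neg_pow, zpow_natCast]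
        have hn1 : (1 : ℝ) ≤ (n : ℝ) := by exact_mod_cast hn
        have h2 := (abs_lt.mp habs1).2
        rw [hψR] at hT1
        linarith
    have hψR : goldenConj ^ (-(R : ℤ)) = goldenRatio ^ ((R : ℤ)) := by
      rw [conj_zpow_neg_nat, hRe.neg_pow, zpow_natCast]
    rw [hψR] at hT1
    -- digit above the bottom one is 0
    have hε1 : ε (-(R : ℤ) + 1) = 0 := by
      have h := hnocons (-(R : ℤ))
      rcases Nat.le_one_iff_eq_zero_or_eq_one.mp (hdig (-(R : ℤ) + 1)) with h' | h'
      · exact h'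
      · exact absurd ⟨hbR, h'⟩ h
    have hsplit2 : Finset.Icc (-(R : ℤ) + 1) (L : ℤ)
        = insert (-(R : ℤ) + 1) (Finset.Icc (-(R : ℤ) + 2) (L : ℤ)) := by
      ext x; simp only [Finset.mem_Icc, Finset.mem_insert]; omega
    have hnm2 : -(R : ℤ) + 1 ∉ Finset.Icc (-(R : ℤ) + 2) (L : ℤ) := by
      simp only [Finset.mem_Icc]; omega
    have hT2 : (n : ℝ) = goldenRatio ^ ((R : ℤ))
        + ∑ k ∈ Finset.Icc (-(R : ℤ) + 2) (L : ℤ), (ε k : ℝ) * goldenConj ^ k := by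
      rw [hT1, hsplit2, Finset.sum_insert hnm2, hε1]
      norm_num
    have habs2 := abs_sum_conj_lt ε hdig hnocons (-(R : ℤ) + 2) L
    rw [show -(-(R : ℤ) + 2) + 1 = (R : ℤ) - 1 by ring] at habs2
    -- upper bound: n < φ^(R+1), so L ≤ R
    have hfib1 : goldenRatio ^ ((R : ℤ) + 1)
        = goldenRatio ^ ((R : ℤ)) + goldenRatio ^ ((R : ℤ) - 1) := by
      have h := gold_fib_zpow ((R : ℤ) - 1)
      rw [show (R : ℤ) - 1 + 2 = (R : ℤ) + 1 by ring,
        show (R : ℤ) - 1 + 1 = (R : ℤ) by ring] at h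
      exact h
    have hLleR : (L : ℤ) < (R : ℤ) + 1 := by
      by_contra h'
      push_neg at h'
      have hmono : goldenRatio ^ ((R : ℤ) + 1) ≤ goldenRatio ^ ((L : ℤ)) :=
        zpow_le_zpow_right₀ one_lt_goldenRatio.le h'
      have h2 := (abs_lt.mp habs2).2
      linarith
    -- lower bound: φ^(R-1) < n, so R ≤ L + 1
    have hR2 : 2 ≤ R := by
      rcases hRe with ⟨r, hr⟩; omega
    have hsplit3 : Finset.Icc (-(R : ℤ) + 2) (L : ℤ)
        = insert (-(R : ℤ) + 2) (Finset.Icc (-(R : ℤ) + 3) (L : ℤ)) := by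
      ext x; simp only [Finset.mem_Icc, Finset.mem_insert]; omega
    have hnm3 : -(R : ℤ) + 2 ∉ Finset.Icc (-(R : ℤ) + 3) (L : ℤ) := by
      simp only [Finset.mem_Icc]; omega
    have hT3 : (n : ℝ) = goldenRatio ^ ((R : ℤ))
        + (ε (-(R : ℤ) + 2) : ℝ) * goldenConj ^ (-(R : ℤ) + 2)
        + ∑ k ∈ Finset.Icc (-(R : ℤ) + 3) (L : ℤ), (ε k : ℝ) * goldenConj ^ k := by
      rw [hT2, hsplit3, Finset.sum_insert hnm3]
      ring
    have hε2 : 0 ≤ (ε (-(R : ℤ) + 2) : ℝ) * goldenConj ^ (-(R : ℤ) + 2) := by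
      apply mul_nonneg (Nat.cast_nonneg _)
      apply Even.zpow_nonneg
      obtain ⟨r, hr⟩ := hRe
      exact ⟨-(r : ℤ) + 1, by push_cast [hr]; ring⟩
    have habs3 := abs_sum_conj_lt ε hdig hnocons (-(R : ℤ) + 3) L
    rw [show -(-(R : ℤ) + 3) + 1 = (R : ℤ) - 2 by ring] at habs3
    have hfib2 : goldenRatio ^ ((R : ℤ))
        = goldenRatio ^ ((R : ℤ) - 1) + goldenRatio ^ ((R : ℤ) - 2) := by
      have h := gold_fib_zpow ((R : ℤ) - 2)
      rw [show (R : ℤ) - 2 + 2 = (R : ℤ) by ring,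
        show (R : ℤ) - 2 + 1 = (R : ℤ) - 1 by ring] at h
      exact h
    have hRleL : (R : ℤ) - 1 < (L : ℤ) + 1 := by
      by_contra h'
      push_neg at h'
      have hmono : goldenRatio ^ ((L : ℤ) + 1) ≤ goldenRatio ^ ((R : ℤ) - 1) :=
        zpow_le_zpow_right₀ one_lt_goldenRatio.le h'
      have h3 := (abs_lt.mp habs3).1
      linarith
    rw [Nat.even_iff] at hRe
    constructor
    · intro hLe; rw [Nat.even_iff] at hLe; omega
    · intro hLo; rw [Nat.odd_iff] at hLo; omega
end

section
/- Let A be a finite alphabet, μ a shift-invariant probability measure on A^ℕ, and let (v_i) and (w_i) be sequences of finite words over A with ‖v_i‖ = ‖w_i‖ for all i, ‖v_i‖ → ∞, such that both infinite words v = v_1 v_2 v_3 ... and w = w_1 w_2 w_3 ... are μ-normal, and moreover ‖v_{N+1}‖ / (‖v_1‖ + ... + ‖v_N‖) → 0 and N / (‖v_1‖ + ... + ‖v_N‖) → 0 as N → ∞. Then the interleaved word u = v_1 w_1 v_2 w_2 v_3 w_3 ... is μ-normal. -/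
open Filter MeasureTheory

/-- Number of occurrences of the pattern `d` starting within the first `n`
letters of the infinite word `ω`. -/
def occCount {A : Type*} [DecidableEq A] (d : List A) (ω : ℕ → A) (n : ℕ) : ℕ :=
  ((Finset.range n).filter
    (fun i => List.ofFn (fun j : Fin d.length => ω (i + (j : ℕ))) = d)).card

/-- The cylinder set of infinite words starting with the finite word `d`. -/
def cylinder {A : Type*} (d : List A) : Set (ℕ → A) :=
  {ω | List.ofFn (fun j : Fin d.length => ω (j : ℕ)) = d}

/-- An infinite word is μ-normal if every finite pattern occurs with asymptotic
frequency the μ-measure of its cylinder. -/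
def IsMuNormal {A : Type*} [DecidableEq A] [MeasurableSpace A]
    (μ : Measure (ℕ → A)) (ω : ℕ → A) : Prop :=
  ∀ d : List A,
    Tendsto (fun n => (occCount d ω n : ℝ) / n) atTop
      (nhds (μ (cylinder d)).toReal)

/-- `ω` is the infinite concatenation of the finite words `v 0, v 1, v 2, ...`. -/
def IsConcat {A : Type*} (v : ℕ → List A) (ω : ℕ → A) : Prop :=
  ∀ N j, j < ∑ i ∈ Finset.range N, (v i).length →
    ((List.range N).map v).flatten[j]? = some (ω j)

/- ## Auxiliary machinery -/

lemma isConcat_letter {A : Type*} {x : ℕ → List A} {X : ℕ → A} (hX : IsConcat x X)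
    (i t : ℕ) (ht : t < (x i).length) :
    X ((∑ j ∈ Finset.range i, (x j).length) + t) = (x i).get ⟨t, ht⟩ := by
  set S := ∑ j ∈ Finset.range i, (x j).length with hS
  have h1 : S + t < ∑ j ∈ Finset.range (i+1), (x j).length := by
    rw [Finset.sum_range_succ]; omega
  have h2 := hX (i+1) (S + t) h1
  have h3 : ((List.range (i+1)).map x).flatten = ((List.range i).map x).flatten ++ x i := by
    rw [List.range_succ, List.map_append, List.flatten_append]
    simp
  have hlen : ((List.range i).map x).flatten.length = S := by
    rw [List.length_flatten, List.map_map]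
    exact rfl
  rw [h3, List.getElem?_append_right (by omega)] at h2
  rw [hlen] at h2
  have : S + t - S = t := by omega
  rw [this, List.getElem?_eq_getElem ht] at h2
  exact (Option.some.injEq _ _ ▸ h2).symm

/-- occurrence count on an interval of starting positions -/
def cnt {A : Type*} [DecidableEq A] (d : List A) (ω : ℕ → A) (a b : ℕ) : ℕ :=
  ((Finset.Ico a b).filter
    (fun p => List.ofFn (fun j : Fin d.length => ω (p + (j : ℕ))) = d)).card

lemma occCount_eq_cnt {A : Type*} [DecidableEq A] (d : List A) (ω : ℕ → A) (n : ℕ) :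
    occCount d ω n = cnt d ω 0 n := by
  unfold occCount cnt
  rw [Finset.range_eq_Ico]

lemma cnt_add {A : Type*} [DecidableEq A] (d : List A) (ω : ℕ → A) {a b c : ℕ}
    (hab : a ≤ b) (hbc : b ≤ c) : cnt d ω a c = cnt d ω a b + cnt d ω b c := by
  unfold cnt
  rw [← Finset.Ico_union_Ico_eq_Ico hab hbc, Finset.filter_union,
    Finset.card_union_of_disjoint]
  exact Finset.disjoint_filter_filter (Finset.Ico_disjoint_Ico_consecutive a b c)

lemma cnt_le {A : Type*} [DecidableEq A] (d : List A) (ω : ℕ → A) (a b : ℕ) :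
    cnt d ω a b ≤ b - a := by
  calc cnt d ω a b ≤ (Finset.Ico a b).card := Finset.card_filter_le _ _
  _ = b - a := Nat.card_Ico a b

/-- shift comparison: counts in ω2 on `[a,b)` vs counts in ω1 on `[a+s, b+s)`. -/
lemma cnt_shift {A : Type*} [DecidableEq A] (d : List A) (ω1 ω2 : ℕ → A) (a b s : ℕ)
    (h : ∀ q, a ≤ q → q + d.length ≤ b → ∀ j < d.length, ω1 (q + s + j) = ω2 (q + j)) :
    cnt d ω2 a b ≤ cnt d ω1 (a+s) (b+s) + d.length ∧
    cnt d ω1 (a+s) (b+s) ≤ cnt d ω2 a b + d.length := by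
  set k := d.length with hk
  constructor
  · have hsplit : ((Finset.Ico a b).filter
        (fun p => List.ofFn (fun j : Fin k => ω2 (p + (j : ℕ))) = d)) ⊆
        ((Finset.Ico a b).filter
          (fun p => p + k ≤ b ∧ List.ofFn (fun j : Fin k => ω2 (p + (j : ℕ))) = d)) ∪
        Finset.Ico (b - k) b := by
      intro p hp
      simp only [Finset.mem_filter, Finset.mem_Ico, Finset.mem_union] at *
      by_cases hpb : p + k ≤ b
      · exact Or.inl ⟨hp.1, hpb, hp.2⟩
      · exact Or.inr ⟨by omega, hp.1.2⟩
    have h1 : ((Finset.Ico a b).filter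
          (fun p => p + k ≤ b ∧ List.ofFn (fun j : Fin k => ω2 (p + (j : ℕ))) = d)).card ≤
        cnt d ω1 (a+s) (b+s) := by
      apply Finset.card_le_card_of_injOn (fun p => p + s)
      · intro p hp
        simp only [Finset.mem_coe, Finset.mem_filter, Finset.mem_Ico] at *
        refine ⟨⟨by omega, by omega⟩, ?_⟩
        have heq : (fun j : Fin k => ω1 (p + s + (j:ℕ))) = (fun j : Fin k => ω2 (p + (j:ℕ))) :=
          funext fun j => h p hp.1.1 hp.2.1 j j.isLt
        rw [heq]
        exact hp.2.2
      · intro p _ q _ hpq; dsimp only at hpq; omega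
    calc cnt d ω2 a b ≤ _ := Finset.card_le_card hsplit
      _ ≤ _ + (Finset.Ico (b-k) b).card := Finset.card_union_le _ _
      _ ≤ cnt d ω1 (a+s) (b+s) + k := by
          have : (Finset.Ico (b-k) b).card ≤ k := by rw [Nat.card_Ico]; omega
          omega
  · have hsplit : ((Finset.Ico (a+s) (b+s)).filter
        (fun p => List.ofFn (fun j : Fin k => ω1 (p + (j : ℕ))) = d)) ⊆
        ((Finset.Ico (a+s) (b+s)).filter
          (fun p => p + k ≤ b + s ∧ List.ofFn (fun j : Fin k => ω1 (p + (j : ℕ))) = d)) ∪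
        Finset.Ico (b + s - k) (b+s) := by
      intro p hp
      simp only [Finset.mem_filter, Finset.mem_Ico, Finset.mem_union] at *
      by_cases hpb : p + k ≤ b + s
      · exact Or.inl ⟨hp.1, hpb, hp.2⟩
      · exact Or.inr ⟨by omega, hp.1.2⟩
    have h1 : ((Finset.Ico (a+s) (b+s)).filter
          (fun p => p + k ≤ b + s ∧ List.ofFn (fun j : Fin k => ω1 (p + (j : ℕ))) = d)).card ≤
        cnt d ω2 a b := by
      apply Finset.card_le_card_of_injOn (fun p => p - s)
      · intro p hp
        simp only [Finset.mem_coe, Finset.mem_filter, Finset.mem_Ico] at *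
        obtain ⟨⟨hp1, hp2⟩, hp3, hp4⟩ := hp
        refine ⟨⟨by omega, by omega⟩, ?_⟩
        have heq : (fun j : Fin k => ω2 (p - s + (j:ℕ))) = (fun j : Fin k => ω1 (p + (j:ℕ))) := by
          funext j
          have := h (p - s) (by omega) (by omega) j j.isLt
          have hps : p - s + s = p := by omega
          rw [hps] at this
          exact this.symm
        rw [heq]
        exact hp4
      · intro p hp q hq hpq
        simp only [Finset.mem_coe, Finset.mem_filter, Finset.mem_Ico] at hp hq
        dsimp only at hpq
        omega
    calc cnt d ω1 (a+s) (b+s) ≤ _ := Finset.card_le_card hsplit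
      _ ≤ _ + (Finset.Ico (b+s-k) (b+s)).card := Finset.card_union_le _ _
      _ ≤ cnt d ω2 a b + k := by
          have : (Finset.Ico (b+s-k) (b+s)).card ≤ k := by rw [Nat.card_Ico]; omega
          omega

set_option maxHeartbeats 1600000 in
/-- Interleaving two μ-normal words built from blocks of equal lengths tending to
infinity (with the stated ratio conditions) yields a μ-normal word. -/
theorem interleave_of_normal {A : Type*} [Fintype A] [DecidableEq A]
    [MeasurableSpace A] (μ : Measure (ℕ → A)) [IsProbabilityMeasure μ]
    (hshift : MeasurePreserving (fun ω (n : ℕ) => ω (n + 1)) μ μ)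
    (v w : ℕ → List A)
    (hlen : ∀ i, (v i).length = (w i).length)
    (hlen_top : Tendsto (fun i => (v i).length) atTop atTop)
    (hratio1 : Tendsto
      (fun N : ℕ => ((v N).length : ℝ) / ∑ i ∈ Finset.range N, ((v i).length : ℝ))
      atTop (nhds 0))
    (hratio2 : Tendsto
      (fun N : ℕ => (N : ℝ) / ∑ i ∈ Finset.range N, ((v i).length : ℝ))
      atTop (nhds 0))
    (V W u : ℕ → A)
    (hV : IsConcat v V) (hW : IsConcat w W)
    (hVnorm : IsMuNormal μ V) (hWnorm : IsMuNormal μ W)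
    (hu : IsConcat (fun i => v i ++ w i) u) :
    IsMuNormal μ u := by
  intro d
  set c : ℝ := (μ (cylinder d)).toReal with hc
  have hc0 : 0 ≤ c := ENNReal.toReal_nonneg
  set k := d.length with hkdef
  rcases Nat.eq_zero_or_pos k with hk0 | hkpos
  · -- empty pattern: occCount is n, limits agree with that of V
    have hocc : ∀ (ω : ℕ → A) (n : ℕ), occCount d ω n = n := by
      intro ω n
      have hdnil : d = [] := List.length_eq_zero_iff.mp hk0
      subst hdnil
      simp [occCount]
    have h1 := hVnorm d
    simp only [hocc] at h1 ⊢
    exact h1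
  -- notation
  set L : ℕ → ℕ := fun i => (v i).length with hL
  set S : ℕ → ℕ := fun N => ∑ i ∈ Finset.range N, L i with hSdef
  have hSmono : Monotone S := by
    intro a b hab
    exact Finset.sum_le_sum_of_subset (Finset.range_subset_range.mpr hab)
  have hSsucc : ∀ N, S (N+1) = S N + L N := by
    intro N; exact Finset.sum_range_succ L N
  have hSw : ∀ i, (∑ j ∈ Finset.range i, (w j).length) = S i := by
    intro i
    exact (Finset.sum_congr rfl (fun j _ => (hlen j).symm))
  have hSu : ∀ i, (∑ j ∈ Finset.range i, ((fun i => v i ++ w i) j).length) = 2 * S i := by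
    intro i
    simp only [List.length_append]
    rw [Finset.sum_add_distrib, hSw i]
    have : ∑ j ∈ Finset.range i, (v j).length = S i := rfl
    omega
  -- letters of u
  have hav : ∀ i t, ∀ ht : t < L i, u (2 * S i + t) = V (S i + t) := by
    intro i t ht
    have h1 := isConcat_letter hu i t
      (by simp only [List.length_append]; have hLi : L i = (v i).length := rfl; omega)
    rw [hSu i] at h1
    have h2 := isConcat_letter hV i t ht
    rw [h1, h2]
    simp only [List.get_eq_getElem]
    exact List.getElem_append_left ht
  have haw : ∀ i t, ∀ ht : t < L i, u (2 * S i + L i + t) = W (S i + t) := by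
    intro i t ht
    have htw : t < (w i).length := by rw [← hlen i]; exact ht
    have h1 := isConcat_letter hu i (L i + t)
      (by simp only [List.length_append]; have hLi : L i = (v i).length := rfl; omega)
    rw [hSu i] at h1
    have h2 := isConcat_letter hW i t htw
    rw [hSw i] at h2
    have harg : 2 * S i + L i + t = 2 * S i + (L i + t) := by omega
    rw [harg, h1, h2]
    simp only [List.get_eq_getElem]
    have hLi : (v i).length = L i := rfl
    rw [List.getElem_append_right (by omega)]
    have hidx : L i + t - (v i).length = t := by omega
    simp only [hidx]
  -- per-block comparison, and global comparison by induction
  have claim : ∀ N, cnt d u 0 (2 * S N) ≤ cnt d V 0 (S N) + cnt d W 0 (S N) + 2*k*N ∧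
      cnt d V 0 (S N) + cnt d W 0 (S N) ≤ cnt d u 0 (2 * S N) + 2*k*N := by
    intro N
    induction N with
    | zero => simp [hSdef, cnt]
    | succ N ih =>
      have hvb := cnt_shift d u V (S N) (S (N+1)) (S N) (by
        intro q hq hqk j hj
        have ht : q + j - S N < L N := by
          have := hSsucc N; omega
        have harg : q + S N + j = 2 * S N + (q + j - S N) := by omega
        rw [harg, hav N _ ht]
        congr 1
        omega)
      have hwb := cnt_shift d u W (S N) (S (N+1)) (S N + L N) (by
        intro q hq hqk j hj
        have ht : q + j - S N < L N := by
          have := hSsucc N; omega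
        have harg : q + (S N + L N) + j = 2 * S N + L N + (q + j - S N) := by omega
        rw [harg, haw N _ ht]
        congr 1
        omega)
      have e1 : S N + S N = 2 * S N := by omega
      have e2 : S (N+1) + S N = 2 * S N + L N := by have := hSsucc N; omega
      have e3 : S N + (S N + L N) = 2 * S N + L N := by omega
      have e4 : S (N+1) + (S N + L N) = 2 * S (N+1) := by have := hSsucc N; omega
      rw [e1, e2] at hvb
      rw [e3, e4] at hwb
      have e7 : 2 * S N + L N ≤ 2 * S (N+1) := by have := hSsucc N; omega
      have d1a : cnt d u 0 (2 * S (N+1)) =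
          cnt d u 0 (2 * S N + L N) + cnt d u (2 * S N + L N) (2 * S (N+1)) :=
        cnt_add d u (Nat.zero_le _) e7
      have d1b : cnt d u 0 (2 * S N + L N) =
          cnt d u 0 (2 * S N) + cnt d u (2 * S N) (2 * S N + L N) :=
        cnt_add d u (Nat.zero_le _) (Nat.le_add_right _ _)
      have d2 : cnt d V 0 (S (N+1)) = cnt d V 0 (S N) + cnt d V (S N) (S (N+1)) :=
        cnt_add d V (Nat.zero_le _) (by have := hSsucc N; omega)
      have d3 : cnt d W 0 (S (N+1)) = cnt d W 0 (S N) + cnt d W (S N) (S (N+1)) :=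
        cnt_add d W (Nat.zero_le _) (by have := hSsucc N; omega)
      have hm : 2*k*(N+1) = 2*k*N + 2*k := by ring
      omega
  -- index function
  obtain ⟨i₀, hi₀⟩ := eventually_atTop.mp (hlen_top.eventually_ge_atTop 1)
  have hSlow : ∀ b, b ≤ S (i₀ + b) := by
    intro b
    calc b = ∑ i ∈ Finset.Ico i₀ (i₀ + b), 1 := by
          rw [Finset.sum_const, Nat.card_Ico, smul_eq_mul]; omega
    _ ≤ ∑ i ∈ Finset.Ico i₀ (i₀ + b), L i :=
        Finset.sum_le_sum (fun i hi => hi₀ i (Finset.mem_Ico.mp hi).1)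
    _ ≤ S (i₀ + b) := Finset.sum_le_sum_of_subset (by
        intro x hx
        simp only [Finset.mem_Ico, Finset.mem_range] at *
        omega)
  have hStop : Tendsto S atTop atTop := by
    rw [tendsto_atTop_atTop]
    intro b
    exact ⟨i₀ + b, fun N hN => le_trans (hSlow b) (hSmono hN)⟩
  set idx : ℕ → ℕ := fun n => Nat.findGreatest (fun N => 2 * S N ≤ n) (i₀ + n) with hidxdef
  have hidx1 : ∀ n, 2 * S (idx n) ≤ n := by
    intro n
    exact Nat.findGreatest_spec (P := fun N => 2 * S N ≤ n) (m := 0) (Nat.zero_le _)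
      (by have h0 : S 0 = 0 := rfl; omega)
  have hidx2 : ∀ n, 1 ≤ n → n < 2 * S (idx n + 1) := by
    intro n hn
    by_cases hcase : idx n + 1 ≤ i₀ + n
    · have hng := Nat.findGreatest_is_greatest (P := fun N => 2 * S N ≤ n)
        (Nat.lt_succ_self (idx n)) hcase
      simp only [not_le] at hng
      exact hng
    · exfalso
      have h1 : i₀ + n ≤ idx n := by omega
      have h2 : n ≤ S (idx n) := le_trans (hSlow n) (hSmono h1)
      have := hidx1 n
      omega
  have hidx_top : Tendsto idx atTop atTop := by
    rw [tendsto_atTop_atTop]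
    intro K
    refine ⟨max 1 (2 * S K), fun n hn => ?_⟩
    by_contra hcon
    push_neg at hcon
    have h1 : idx n + 1 ≤ K := hcon
    have h2 := hidx2 n (le_trans (le_max_left _ _) hn)
    have h3 : S (idx n + 1) ≤ S K := hSmono h1
    have h4 : 2 * S K ≤ n := le_trans (le_max_right _ _) hn
    omega
  -- the real-valued bound sequence
  have hVd := hVnorm d
  have hWd := hWnorm d
  set B : ℕ → ℝ := fun N => |(occCount d V (S N) : ℝ) / (S N) - c| / 2
      + |(occCount d W (S N) : ℝ) / (S N) - c| / 2
      + (k : ℝ) * ((N : ℝ) / (S N)) + (k : ℝ) * (1 / (S N))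
      + (1 + c) * ((L N : ℝ) / (S N)) with hBdef
  have hSreal : ∀ N : ℕ, (∑ i ∈ Finset.range N, ((v i).length : ℝ)) = ((S N : ℕ) : ℝ) := by
    intro N
    rw [hSdef]
    push_cast
    rfl
  have hB0 : Tendsto B atTop (nhds 0) := by
    have t1 : Tendsto (fun N : ℕ => |(occCount d V (S N) : ℝ) / (S N) - c| / 2) atTop (nhds 0) := by
      have := ((hVd.comp hStop).sub_const c).abs
      have h2 := this.div_const 2
      rw [← hc, sub_self, abs_zero, zero_div] at h2
      exact h2
    have t2 : Tendsto (fun N : ℕ => |(occCount d W (S N) : ℝ) / (S N) - c| / 2) atTop (nhds 0) := by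
      have := ((hWd.comp hStop).sub_const c).abs
      have h2 := this.div_const 2
      rw [← hc, sub_self, abs_zero, zero_div] at h2
      exact h2
    have t3 : Tendsto (fun N : ℕ => (k : ℝ) * ((N : ℝ) / (S N))) atTop (nhds 0) := by
      have : Tendsto (fun N : ℕ => (N : ℝ) / (S N)) atTop (nhds 0) := by
        have := hratio2
        simp only [hSreal] at this
        exact this
      simpa using this.const_mul (k : ℝ)
    have t4 : Tendsto (fun N : ℕ => (k : ℝ) * (1 / (S N : ℝ))) atTop (nhds 0) := by
      have : Tendsto (fun N : ℕ => 1 / (S N : ℝ)) atTop (nhds 0) := by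
        apply Tendsto.comp tendsto_one_div_atTop_nhds_zero_nat hStop
      simpa using this.const_mul (k : ℝ)
    have t5 : Tendsto (fun N : ℕ => (1 + c) * ((L N : ℝ) / (S N))) atTop (nhds 0) := by
      have : Tendsto (fun N : ℕ => (L N : ℝ) / (S N)) atTop (nhds 0) := by
        have := hratio1
        simp only [hSreal] at this
        exact this
      simpa using this.const_mul (1 + c)
    have htot := ((((t1.add t2).add t3).add t4).add t5)
    rw [hBdef]
    simpa using htot
  -- eventual bound
  have hev : ∀ᶠ n in atTop, ‖(occCount d u n : ℝ) / n - c‖ ≤ B (idx n) := by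
    obtain ⟨N₁, hN₁⟩ := eventually_atTop.mp (hStop.eventually_ge_atTop 1)
    obtain ⟨n₁, hn₁⟩ := eventually_atTop.mp (hidx_top.eventually_ge_atTop N₁)
    filter_upwards [eventually_ge_atTop (max 1 n₁)] with n hn
    have hn1 : 1 ≤ n := le_trans (le_max_left _ _) hn
    set N := idx n with hNdef
    have hsN : 1 ≤ S N := hN₁ N (hn₁ n (le_trans (le_max_right _ _) hn))
    have h2sn : 2 * S N ≤ n := hidx1 n
    have hnup : n < 2 * S N + 2 * L N := by
      have h1 : n < 2 * S (N + 1) := by rw [hNdef]; exact hidx2 n hn1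
      have := hSsucc N
      omega
    -- nat inequalities
    have hmono1 : cnt d u 0 (2 * S N) ≤ occCount d u n := by
      rw [occCount_eq_cnt, cnt_add d u (Nat.zero_le _) h2sn]
      omega
    have hmono2 : occCount d u n ≤ cnt d u 0 (2 * S (N+1)) := by
      have hnlt : n ≤ 2 * S (N+1) := by rw [hSsucc]; omega
      rw [occCount_eq_cnt, cnt_add d u (Nat.zero_le _) hnlt]
      omega
    have hVstep : cnt d V 0 (S (N+1)) ≤ cnt d V 0 (S N) + L N := by
      have hd : cnt d V 0 (S (N+1)) = cnt d V 0 (S N) + cnt d V (S N) (S (N+1)) :=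
        cnt_add d V (Nat.zero_le _) (by rw [hSsucc]; omega)
      have hle := cnt_le d V (S N) (S (N+1))
      have := hSsucc N
      omega
    have hWstep : cnt d W 0 (S (N+1)) ≤ cnt d W 0 (S N) + L N := by
      have hd : cnt d W 0 (S (N+1)) = cnt d W 0 (S N) + cnt d W (S N) (S (N+1)) :=
        cnt_add d W (Nat.zero_le _) (by rw [hSsucc]; omega)
      have hle := cnt_le d W (S N) (S (N+1))
      have := hSsucc N
      omega
    have hclaimN := claim N
    have hclaimN1 := claim (N+1)
    have hup : occCount d u n ≤ occCount d V (S N) + occCount d W (S N)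
        + 2 * L N + 2*k*(N+1) := by
      rw [occCount_eq_cnt, occCount_eq_cnt, occCount_eq_cnt] at *
      omega
    have hlo : occCount d V (S N) + occCount d W (S N) ≤ occCount d u n + 2*k*N := by
      rw [occCount_eq_cnt, occCount_eq_cnt, occCount_eq_cnt] at *
      omega
    -- to the reals
    have hnR : (0:ℝ) < n := by exact_mod_cast hn1
    have hsR : (0:ℝ) < S N := by exact_mod_cast hsN
    set a : ℝ := (occCount d V (S N) : ℝ) with ha
    set b : ℝ := (occCount d W (S N) : ℝ) with hb
    set m : ℝ := (occCount d u n : ℝ) with hm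
    set s : ℝ := ((S N : ℕ) : ℝ) with hs
    set ℓ : ℝ := ((L N : ℕ) : ℝ) with hl
    have hk0' : (0:ℝ) ≤ k := Nat.cast_nonneg k
    have hl0 : (0:ℝ) ≤ ℓ := hl ▸ Nat.cast_nonneg _
    have hexp : 2*(k:ℝ)*((N:ℝ)+1) = 2*(k:ℝ)*(N:ℝ) + 2*(k:ℝ) := by ring
    have habm : |m - (a + b)| ≤ 2*(k:ℝ)*((N:ℝ)+1) + 2*ℓ := by
      have hloR : a + b ≤ m + 2*(k:ℝ)*(N:ℝ) := by
        rw [ha, hb, hm]; exact_mod_cast hlo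
      have hupR : m ≤ a + b + 2*ℓ + 2*(k:ℝ)*((N:ℝ)+1) := by
        rw [ha, hb, hm, hl]
        exact_mod_cast hup
      rw [abs_le]
      constructor
      · linarith
      · linarith
    have hn2s : 2 * s ≤ (n:ℝ) := by rw [hs]; exact_mod_cast h2sn
    have hn2s' : (n:ℝ) ≤ 2*s + 2*ℓ := by
      rw [hs, hl]
      have h' : n ≤ 2 * S N + 2 * L N := le_of_lt hnup
      exact_mod_cast h'
    have key : |m - c * n| ≤ |a - c*s| + |b - c*s| + (2*(k:ℝ)*((N:ℝ)+1) + (2+2*c)*ℓ) := by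
      have t1 : |m - c*n| ≤ |m - (a+b)| + |(a+b) - 2*c*s| + |2*c*s - c*n| := by
        have := abs_sub_le m (a+b) (c*n)
        have := abs_sub_le (a+b) (2*c*s) (c*n)
        calc |m - c*n| ≤ |m - (a+b)| + |(a+b) - c*n| := abs_sub_le _ _ _
        _ ≤ |m - (a+b)| + (|(a+b) - 2*c*s| + |2*c*s - c*n|) := by
            have := abs_sub_le (a+b) (2*c*s) (c*n)
            linarith
        _ = _ := by ring
      have t2 : |(a+b) - 2*c*s| ≤ |a - c*s| + |b - c*s| := by
        have : (a+b) - 2*c*s = (a - c*s) + (b - c*s) := by ring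
        rw [this]
        exact abs_add_le _ _
      have t3 : |2*c*s - c*n| ≤ 2*c*ℓ := by
        rw [abs_le]
        constructor
        · nlinarith [mul_le_mul_of_nonneg_left hn2s' hc0]
        · nlinarith [mul_le_mul_of_nonneg_left hn2s hc0, mul_nonneg hc0 hl0]
      linarith [habm]
    have hdivs : m / n - c = (m - c*n) / n := by
      field_simp
    rw [Real.norm_eq_abs, hdivs, abs_div, abs_of_pos hnR]
    have hs' : s ≠ 0 := ne_of_gt hsR
    have EA : |a - c*s| / (2*s) = |a/s - c| / 2 := by
      rw [show a/s - c = (a - c*s)/s by field_simp, abs_div, abs_of_pos hsR]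
      ring
    have EB : |b - c*s| / (2*s) = |b/s - c| / 2 := by
      rw [show b/s - c = (b - c*s)/s by field_simp, abs_div, abs_of_pos hsR]
      ring
    have EC : (2*(k:ℝ)*((N:ℝ)+1) + (2+2*c)*ℓ) / (2*s)
        = (k:ℝ)*((N:ℝ)/s) + (k:ℝ)*(1/s) + (1+c)*(ℓ/s) := by
      field_simp
    have hX0 : (0:ℝ) ≤ |a - c*s| + |b - c*s| + (2*(k:ℝ)*((N:ℝ)+1) + (2+2*c)*ℓ) := by
      have h1 : (0:ℝ) ≤ |a - c*s| := abs_nonneg _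
      have h2 : (0:ℝ) ≤ |b - c*s| := abs_nonneg _
      have h3 : (0:ℝ) ≤ 2*(k:ℝ)*((N:ℝ)+1) := by positivity
      have h4 : (0:ℝ) ≤ (2+2*c)*ℓ := mul_nonneg (by linarith) hl0
      linarith
    have step1 : |m - c*n| / n ≤ (|a - c*s| + |b - c*s| + (2*(k:ℝ)*((N:ℝ)+1) + (2+2*c)*ℓ)) / n :=
      (div_le_div_iff_of_pos_right hnR).mpr key
    have step2 : (|a - c*s| + |b - c*s| + (2*(k:ℝ)*((N:ℝ)+1) + (2+2*c)*ℓ)) / n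
        ≤ (|a - c*s| + |b - c*s| + (2*(k:ℝ)*((N:ℝ)+1) + (2+2*c)*ℓ)) / (2*s) :=
      div_le_div_of_nonneg_left hX0 (by positivity) hn2s
    have step3 : (|a - c*s| + |b - c*s| + (2*(k:ℝ)*((N:ℝ)+1) + (2+2*c)*ℓ)) / (2*s)
        = |a/s - c|/2 + |b/s - c|/2
          + ((k:ℝ)*((N:ℝ)/s) + (k:ℝ)*(1/s) + (1+c)*(ℓ/s)) := by
      rw [add_div, add_div, EA, EB, EC]
    have hBN : B N = |a/s - c|/2 + |b/s - c|/2
        + ((k:ℝ)*((N:ℝ)/s) + (k:ℝ)*(1/s) + (1+c)*(ℓ/s)) := by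
      simp only [hBdef]
      ring
    rw [hBN]
    calc |m - c*n| / (n:ℝ) ≤ _ := step1
      _ ≤ _ := step2
      _ = _ := step3
  have hfinal : Tendsto (fun n => (occCount d u n : ℝ)/n - c) atTop (nhds 0) :=
    squeeze_zero_norm' hev ((hB0.comp hidx_top) : Tendsto (fun n => B (idx n)) atTop (nhds 0))
  exact tendsto_sub_nhds_zero_iff.mp hfinal
end

section
/- Let A be a finite alphabet, (v_i) a sequence of finite words with ‖v_i‖ → ∞ satisfying ‖v_{N+1}‖/(‖v_1‖+...+‖v_N‖) → 0 and N/(‖v_1‖+...+‖v_N‖) → 0, and suppose the concatenation v = v_1 v_2 ... is μ-normal for a shift-invariant probability measure μ. Then for every finite word d, (1/n) Σ_{i=1}^{N(n)} N_d(v_i) → μ(d) as n → ∞, where N(n) is maximal with ‖v_1‖+...+‖v_{N(n)}‖ ≤ n and N_d(v_i) counts occurrences of d inside v_i alone. -/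
open Filter MeasureTheory

/-- Number of occurrences of `d` as a factor of the finite word `w`. -/
def countFactor {A : Type*} [DecidableEq A] (d w : List A) : ℕ :=
  ((Finset.range (w.length + 1)).filter
    (fun j => j + d.length ≤ w.length ∧ (w.drop j).take d.length = d)).card

lemma aux_flatten_len {A : Type*} (v : ℕ → List A) (i : ℕ) :
    ((List.range i).map v).flatten.length = ∑ t ∈ Finset.range i, (v t).length := by
  induction i with
  | zero => simp
  | succ n ih => simp [List.range_succ, Finset.sum_range_succ, ih]

lemma aux_concat_apply {A : Type*} (v : ℕ → List A) (V : ℕ → A) (hV : IsConcat v V)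
    (i j : ℕ) (hj : j < (v i).length) :
    V ((∑ t ∈ Finset.range i, (v t).length) + j) = (v i)[j] := by
  have h := hV (i+1) ((∑ t ∈ Finset.range i, (v t).length) + j)
    (by rw [Finset.sum_range_succ]; omega)
  rw [List.range_succ, List.map_append, List.flatten_append] at h
  simp only [List.map_cons, List.map_nil, List.flatten_cons, List.flatten_nil,
    List.append_nil] at h
  rw [List.getElem?_append_right (by rw [aux_flatten_len]; omega)] at h
  rw [aux_flatten_len, Nat.add_sub_cancel_left, List.getElem?_eq_getElem hj] at h
  exact (Option.some_injective _ h).symm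

lemma aux_factor_iff {A : Type*} [DecidableEq A] (v : ℕ → List A) (V : ℕ → A)
    (hV : IsConcat v V) (d : List A) (i j : ℕ) (hjk : j + d.length ≤ (v i).length) :
    ((v i).drop j).take d.length = List.ofFn
      (fun t : Fin d.length => V ((∑ s ∈ Finset.range i, (v s).length) + j + (t : ℕ))) := by
  apply List.ext_getElem
  · simp; omega
  · intro t h1 h2
    have ht : t < d.length := by simpa using h2
    rw [List.getElem_take, List.getElem_drop, List.getElem_ofFn]
    rw [add_assoc]
    exact (aux_concat_apply v V hV i (j + t) (by omega)).symm

lemma aux_exists_block (f : ℕ → ℕ) (N p : ℕ) (hp : p < ∑ i ∈ Finset.range N, f i) :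
    ∃ i, i < N ∧ (∑ t ∈ Finset.range i, f t) ≤ p ∧ p < ∑ t ∈ Finset.range (i+1), f t := by
  induction N with
  | zero => simp at hp
  | succ n ih =>
    by_cases h : p < ∑ i ∈ Finset.range n, f i
    · obtain ⟨i, hi, h1, h2⟩ := ih h; exact ⟨i, by omega, h1, h2⟩
    · exact ⟨n, by omega, by omega, hp⟩

lemma aux_bounds {A : Type*} [DecidableEq A] (v : ℕ → List A) (V : ℕ → A)
    (hV : IsConcat v V) (d : List A) (n N : ℕ)
    (h1 : (∑ i ∈ Finset.range N, (v i).length) ≤ n)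
    (h2 : n < ∑ i ∈ Finset.range (N+1), (v i).length) :
    (∑ i ∈ Finset.range N, countFactor d (v i)) ≤ occCount d V n + N ∧
    occCount d V n ≤ (∑ i ∈ Finset.range N, countFactor d (v i))
      + d.length * N + (v N).length := by
  classical
  set S : ℕ → ℕ := fun m => ∑ t ∈ Finset.range m, (v t).length with hSdef
  have hSmono : ∀ a b, a ≤ b → S a ≤ S b := fun a b hab =>
    Finset.sum_le_sum_of_subset (Finset.range_subset_range.mpr hab)
  have hSsucc : ∀ m, S (m + 1) = S m + (v m).length := fun m => Finset.sum_range_succ _ m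
  have hkey : ∀ i j, j + d.length ≤ (v i).length →
      (((v i).drop j).take d.length = d ↔
        List.ofFn (fun t : Fin d.length => V (S i + j + (t : ℕ))) = d) := by
    intro i j hjk
    rw [aux_factor_iff v V hV d i j hjk]
  set O : Finset ℕ := (Finset.range n).filter
    (fun p => List.ofFn (fun t : Fin d.length => V (p + (t : ℕ))) = d) with hO
  have hOcc : occCount d V n = O.card := rfl
  set Afun : ℕ → Finset ℕ := fun i => (Finset.range ((v i).length + 1)).filter
    (fun j => j + d.length ≤ (v i).length ∧ ((v i).drop j).take d.length = d) with hAfun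
  have hCF : ∀ i, countFactor d (v i) = (Afun i).card := fun i => rfl
  set Bfun : ℕ → Finset ℕ := fun i => (Finset.range ((v i).length)).filter
    (fun j => j + d.length ≤ (v i).length ∧ ((v i).drop j).take d.length = d) with hBfun
  have hAB : ∀ i, (Afun i).card ≤ (Bfun i).card + 1 := by
    intro i
    have hsub : Afun i ⊆ insert ((v i).length) (Bfun i) := by
      intro j hj
      rw [hAfun, Finset.mem_filter, Finset.mem_range] at hj
      rcases Nat.lt_succ_iff_lt_or_eq.mp hj.1 with h | h
      · exact Finset.mem_insert_of_mem (by
          rw [hBfun, Finset.mem_filter, Finset.mem_range]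
          exact ⟨h, hj.2⟩)
      · rw [h]; exact Finset.mem_insert_self _ _
    calc (Afun i).card ≤ (insert ((v i).length) (Bfun i)).card := Finset.card_le_card hsub
      _ ≤ (Bfun i).card + 1 := Finset.card_insert_le _ _
  set g : ℕ → Finset ℕ := fun i => (Bfun i).image (fun j => S i + j) with hg
  have hgcard : ∀ i, (g i).card = (Bfun i).card := by
    intro i
    exact Finset.card_image_of_injective _ (fun a b hab => by omega)
  have hgmem : ∀ i p, p ∈ g i → S i ≤ p ∧ p < S (i + 1) := by
    intro i p hp
    rw [hg, Finset.mem_image] at hp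
    obtain ⟨j, hj, rfl⟩ := hp
    rw [hBfun, Finset.mem_filter, Finset.mem_range] at hj
    have := hSsucc i
    omega
  -- part (a)
  have ha : (∑ i ∈ Finset.range N, countFactor d (v i)) ≤ occCount d V n + N := by
    have hdisj : ∀ i ∈ Finset.range N, ∀ i' ∈ Finset.range N, i ≠ i' →
        Disjoint (g i) (g i') := by
      intro i _ i' _ hne
      rw [Finset.disjoint_left]
      intro p hp hp'
      have h1 := hgmem i p hp
      have h2 := hgmem i' p hp'
      rcases lt_or_gt_of_ne hne with h | h
      · have := hSmono (i+1) i' h; omega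
      · have := hSmono (i'+1) i h; omega
    have hcard : ∑ i ∈ Finset.range N, (Bfun i).card
        = ((Finset.range N).biUnion g).card := by
      rw [Finset.card_biUnion hdisj]
      exact Finset.sum_congr rfl (fun i _ => (hgcard i).symm)
    have hsub : (Finset.range N).biUnion g ⊆ O := by
      intro p hp
      rw [Finset.mem_biUnion] at hp
      obtain ⟨i, hiN, hpg⟩ := hp
      rw [Finset.mem_range] at hiN
      have hrange := hgmem i p hpg
      rw [hg, Finset.mem_image] at hpg
      obtain ⟨j, hj, rfl⟩ := hpg
      rw [hBfun, Finset.mem_filter, Finset.mem_range] at hj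
      rw [hO, Finset.mem_filter, Finset.mem_range]
      constructor
      · have e1 := hSsucc i
        have e2 := hSmono (i+1) N hiN
        have e3 : S N ≤ n := h1
        omega
      · exact (hkey i j hj.2.1).mp hj.2.2
    have : ∑ i ∈ Finset.range N, (Bfun i).card ≤ O.card := by
      rw [hcard]; exact Finset.card_le_card hsub
    calc (∑ i ∈ Finset.range N, countFactor d (v i))
        = ∑ i ∈ Finset.range N, (Afun i).card := by simp [hCF]
      _ ≤ ∑ i ∈ Finset.range N, ((Bfun i).card + 1) := Finset.sum_le_sum (fun i _ => hAB i)
      _ = (∑ i ∈ Finset.range N, (Bfun i).card) + N := by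
          rw [Finset.sum_add_distrib, Finset.sum_const, Finset.card_range, smul_eq_mul, mul_one]
      _ ≤ O.card + N := by omega
      _ = occCount d V n + N := by rw [hOcc]
  -- part (b)
  have hb : occCount d V n ≤ (∑ i ∈ Finset.range N, countFactor d (v i))
      + d.length * N + (v N).length := by
    set D : ℕ → Finset ℕ := fun i =>
      ((Afun i).image (fun j => S i + j)) ∪ Finset.Ico (S (i+1) - d.length) (S (i+1)) with hD
    have hsub : O ⊆ (Finset.Ico (S N) n) ∪ (Finset.range N).biUnion D := by
      intro p hp
      rw [hO, Finset.mem_filter, Finset.mem_range] at hp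
      obtain ⟨hpn, hP⟩ := hp
      rw [Finset.mem_union]
      by_cases hpS : S N ≤ p
      · exact Or.inl (Finset.mem_Ico.mpr ⟨hpS, hpn⟩)
      · right
        push_neg at hpS
        obtain ⟨i, hiN, hle, hlt⟩ := aux_exists_block (fun t => (v t).length) N p hpS
        rw [Finset.mem_biUnion]
        refine ⟨i, Finset.mem_range.mpr hiN, ?_⟩
        rw [hD, Finset.mem_union]
        have hsucc := hSsucc i
        have e0 : S i = ∑ t ∈ Finset.range i, (v t).length := rfl
        have e1 : S (i+1) = ∑ t ∈ Finset.range (i+1), (v t).length := rfl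
        by_cases hjk : (p - S i) + d.length ≤ (v i).length
        · left
          rw [Finset.mem_image]
          refine ⟨p - S i, ?_, by omega⟩
          rw [hAfun, Finset.mem_filter, Finset.mem_range]
          refine ⟨by omega, hjk, (hkey i (p - S i) hjk).mpr ?_⟩
          have hpe : S i + (p - S i) = p := by omega
          rw [hpe]
          exact hP
        · right
          rw [Finset.mem_Ico]
          omega
    have hDcard : ∀ i, (D i).card ≤ (Afun i).card + d.length := by
      intro i
      calc (D i).card ≤ ((Afun i).image (fun j => S i + j)).card
            + (Finset.Ico (S (i+1) - d.length) (S (i+1))).card := Finset.card_union_le _ _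
        _ ≤ (Afun i).card + d.length := by
            have := Finset.card_image_le (s := Afun i) (f := fun j => S i + j)
            rw [Nat.card_Ico]
            omega
    have htail : n - S N ≤ (v N).length := by
      have e0 : S N = ∑ i ∈ Finset.range N, (v i).length := rfl
      have e1 : S (N+1) = ∑ i ∈ Finset.range (N+1), (v i).length := rfl
      have e2 := hSsucc N
      omega
    calc occCount d V n = O.card := hOcc
      _ ≤ ((Finset.Ico (S N) n) ∪ (Finset.range N).biUnion D).card := Finset.card_le_card hsub
      _ ≤ (Finset.Ico (S N) n).card + ((Finset.range N).biUnion D).card :=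
          Finset.card_union_le _ _
      _ ≤ (n - S N) + ∑ i ∈ Finset.range N, (D i).card := by
          rw [Nat.card_Ico]
          exact Nat.add_le_add_left Finset.card_biUnion_le _
      _ ≤ (n - S N) + ∑ i ∈ Finset.range N, ((Afun i).card + d.length) := by
          exact Nat.add_le_add_left (Finset.sum_le_sum (fun i _ => hDcard i)) _
      _ = (n - S N) + ((∑ i ∈ Finset.range N, (Afun i).card) + N * d.length) := by
          rw [Finset.sum_add_distrib, Finset.sum_const, Finset.card_range, smul_eq_mul]
      _ ≤ (∑ i ∈ Finset.range N, countFactor d (v i)) + d.length * N + (v N).length := by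
          simp only [hCF]
          rw [Nat.mul_comm N d.length] at *
          omega
  exact ⟨ha, hb⟩

/-- If the concatenation v = v_1 v_2 ... is μ-normal and the block lengths satisfy
the stated growth conditions, then the in-block occurrence counts alone already
have the right asymptotic frequency. -/
theorem inner_block_counts_normal {A : Type*} [Fintype A] [DecidableEq A]
    [MeasurableSpace A] (μ : Measure (ℕ → A)) [IsProbabilityMeasure μ]
    (hshift : MeasurePreserving (fun ω (n : ℕ) => ω (n + 1)) μ μ)
    (v : ℕ → List A)
    (hlen_top : Tendsto (fun i => (v i).length) atTop atTop)
    (hratio1 : Tendsto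
      (fun N : ℕ => ((v N).length : ℝ) / ∑ i ∈ Finset.range N, ((v i).length : ℝ))
      atTop (nhds 0))
    (hratio2 : Tendsto
      (fun N : ℕ => (N : ℝ) / ∑ i ∈ Finset.range N, ((v i).length : ℝ))
      atTop (nhds 0))
    (V : ℕ → A) (hV : IsConcat v V) (hVnorm : IsMuNormal μ V)
    (Nf : ℕ → ℕ)
    (hNf : ∀ n : ℕ, (∑ i ∈ Finset.range (Nf n), (v i).length) ≤ n ∧
      n < ∑ i ∈ Finset.range (Nf n + 1), (v i).length) :
    ∀ d : List A,
      Tendsto (fun n => (∑ i ∈ Finset.range (Nf n), (countFactor d (v i) : ℝ)) / n)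
        atTop (nhds (μ (cylinder d)).toReal) := by
  intro d
  have hSmono : ∀ a b : ℕ, a ≤ b →
      (∑ i ∈ Finset.range a, (v i).length) ≤ ∑ i ∈ Finset.range b, (v i).length :=
    fun a b hab => Finset.sum_le_sum_of_subset (Finset.range_subset_range.mpr hab)
  have hNftop : Tendsto Nf atTop atTop := by
    rw [tendsto_atTop_atTop]
    intro M
    refine ⟨∑ i ∈ Finset.range M, (v i).length, fun n hn => ?_⟩
    by_contra h
    push_neg at h
    have h2 := (hNf n).2
    have := hSmono (Nf n + 1) M (by omega)
    omega
  have hcast : ∀ N : ℕ, (∑ i ∈ Finset.range N, ((v i).length : ℝ))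
      = ((∑ i ∈ Finset.range N, (v i).length : ℕ) : ℝ) := by
    intro N; push_cast; rfl
  have hev1 : ∀ᶠ i in atTop, 1 ≤ (v i).length := hlen_top.eventually_ge_atTop 1
  obtain ⟨i0, hi0⟩ := eventually_atTop.mp hev1
  have hSpos : ∀ N, i0 < N → 1 ≤ ∑ i ∈ Finset.range N, (v i).length := by
    intro N hN
    calc 1 ≤ (v i0).length := hi0 i0 le_rfl
      _ ≤ _ := Finset.single_le_sum (f := fun i => ((v i).length))
          (fun _ _ => Nat.zero_le _) (Finset.mem_range.mpr hN)
  have hevS : ∀ᶠ n in atTop, 1 ≤ ∑ i ∈ Finset.range (Nf n), (v i).length := by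
    filter_upwards [hNftop.eventually_gt_atTop i0] with n hn
    exact hSpos _ hn
  have hle' : ∀ n, 1 ≤ ∑ i ∈ Finset.range (Nf n), (v i).length →
      (∑ i ∈ Finset.range (Nf n), ((v i).length : ℝ)) ≤ n ∧
      (0:ℝ) < ∑ i ∈ Finset.range (Nf n), ((v i).length : ℝ) := by
    intro n h1
    constructor
    · rw [hcast]; exact_mod_cast (hNf n).1
    · rw [hcast]
      have : (0:ℕ) < ∑ i ∈ Finset.range (Nf n), (v i).length := h1
      exact_mod_cast this
  have hA : Tendsto (fun n : ℕ => ((v (Nf n)).length : ℝ) / n) atTop (nhds 0) := by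
    have hr1 : Tendsto (fun n => ((v (Nf n)).length : ℝ) /
        ∑ i ∈ Finset.range (Nf n), ((v i).length : ℝ)) atTop (nhds 0) := by
      have := hratio1.comp hNftop
      exact this
    apply squeeze_zero' (by filter_upwards with n; positivity) ?_ hr1
    filter_upwards [hevS] with n h1
    obtain ⟨hle, hpos⟩ := hle' n h1
    gcongr
  have hB : Tendsto (fun n : ℕ => ((Nf n : ℕ) : ℝ) / n) atTop (nhds 0) := by
    have hr2 : Tendsto (fun n => ((Nf n : ℕ) : ℝ) /
        ∑ i ∈ Finset.range (Nf n), ((v i).length : ℝ)) atTop (nhds 0) := by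
      have := hratio2.comp hNftop
      exact this
    apply squeeze_zero' (by filter_upwards with n; positivity) ?_ hr2
    filter_upwards [hevS] with n h1
    obtain ⟨hle, hpos⟩ := hle' n h1
    gcongr
  have hbound := fun n => aux_bounds v V hV d n (Nf n) (hNf n).1 (hNf n).2
  have hocc := hVnorm d
  have hbnd : Tendsto (fun n : ℕ =>
      (((d.length : ℝ) + 1) * (Nf n) + ((v (Nf n)).length : ℝ)) / n) atTop (nhds 0) := by
    have h := ((hB.const_mul ((d.length : ℝ) + 1)).add hA)
    rw [mul_zero, add_zero] at h
    have heq : (fun n : ℕ =>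
        (((d.length : ℝ) + 1) * (Nf n) + ((v (Nf n)).length : ℝ)) / n)
        = fun n : ℕ => ((d.length : ℝ) + 1) * ((Nf n : ℝ) / n)
          + ((v (Nf n)).length : ℝ) / n := by
      funext n; rw [add_div, mul_div_assoc]
    rw [heq]
    exact h
  have hdiff : Tendsto (fun n : ℕ =>
      (∑ i ∈ Finset.range (Nf n), (countFactor d (v i) : ℝ)) / n
        - (occCount d V n : ℝ) / n) atTop (nhds 0) := by
    have hub : ∀ n : ℕ,
        (∑ i ∈ Finset.range (Nf n), (countFactor d (v i) : ℝ)) / n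
          - (occCount d V n : ℝ) / n
        ≤ (((d.length : ℝ) + 1) * (Nf n) + ((v (Nf n)).length : ℝ)) / n := by
      intro n
      rcases Nat.eq_zero_or_pos n with h0 | hn
      · subst h0; simp
      · have hnp : (0:ℝ) < n := by exact_mod_cast hn
        rw [← sub_div]
        apply div_le_div_of_nonneg_right ?_ hnp.le
        have h1 := (hbound n).1
        have h1' : ((∑ i ∈ Finset.range (Nf n), countFactor d (v i) : ℕ) : ℝ)
            ≤ (occCount d V n : ℝ) + (Nf n : ℝ) := by exact_mod_cast h1
        have hpos1 : (0:ℝ) ≤ (d.length : ℝ) * (Nf n : ℝ) := by positivity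
        have hpos2 : (0:ℝ) ≤ ((v (Nf n)).length : ℝ) := by positivity
        push_cast at h1' ⊢
        nlinarith
    have hlb : ∀ n : ℕ,
        -((((d.length : ℝ) + 1) * (Nf n) + ((v (Nf n)).length : ℝ)) / n)
        ≤ (∑ i ∈ Finset.range (Nf n), (countFactor d (v i) : ℝ)) / n
          - (occCount d V n : ℝ) / n := by
      intro n
      rcases Nat.eq_zero_or_pos n with h0 | hn
      · subst h0; simp
      · have hnp : (0:ℝ) < n := by exact_mod_cast hn
        rw [← sub_div, ← neg_div]
        apply div_le_div_of_nonneg_right ?_ hnp.le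
        have h2 := (hbound n).2
        have h2' : (occCount d V n : ℝ)
            ≤ ((∑ i ∈ Finset.range (Nf n), countFactor d (v i) : ℕ) : ℝ)
              + (d.length : ℝ) * (Nf n : ℝ) + ((v (Nf n)).length : ℝ) := by
          exact_mod_cast h2
        have hpos1 : (0:ℝ) ≤ (Nf n : ℝ) := by positivity
        push_cast at h2' ⊢
        nlinarith
    have hnegbnd : Tendsto (fun n : ℕ =>
        -((((d.length : ℝ) + 1) * (Nf n) + ((v (Nf n)).length : ℝ)) / n))
        atTop (nhds 0) := by
      simpa using hbnd.neg
    exact tendsto_of_tendsto_of_tendsto_of_le_of_le hnegbnd hbnd hlb hub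
  have hfinal := hocc.add hdiff
  rw [add_zero] at hfinal
  have heq : (fun n : ℕ =>
      (∑ i ∈ Finset.range (Nf n), (countFactor d (v i) : ℝ)) / n)
      = fun n : ℕ => (occCount d V n : ℝ) / n
        + ((∑ i ∈ Finset.range (Nf n), (countFactor d (v i) : ℝ)) / n
          - (occCount d V n : ℝ) / n) := by
    funext n; ring
  rw [heq]
  exact hfinal
end

section
/- Let φ = (1+√5)/2. Every positive integer n has a finite greedy φ-expansion; that is, there exist integers L ≥ 0, R ≥ 0 and digits ε_k ∈ {0,1} for -R ≤ k ≤ L, with no two consecutive digits both equal to 1, such that n = Σ_{k=-R}^{L} ε_k φ^k. -/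
namespace GoldenAux

lemma sqrt5_gt_one : (1 : ℝ) < Real.sqrt 5 := by
  have : (1 : ℝ) = Real.sqrt 1 := by simp
  rw [this]
  exact Real.sqrt_lt_sqrt (by norm_num) (by norm_num)

lemma gold_gt_one : 1 < goldenφ := by
  unfold goldenφ
  have := sqrt5_gt_one
  linarith

lemma gold_pos : 0 < goldenφ := lt_trans one_pos gold_gt_one

lemma gold_ne : goldenφ ≠ 0 := ne_of_gt gold_pos

lemma gold_sq : goldenφ ^ 2 = goldenφ + 1 := by
  have h5 : Real.sqrt 5 ^ 2 = 5 := Real.sq_sqrt (by norm_num)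
  unfold goldenφ
  nlinarith [h5]

/-- zpow recurrence: φ^m = φ^(m-1) + φ^(m-2). -/
lemma gold_rec (m : ℤ) : goldenφ ^ m = goldenφ ^ (m - 1) + goldenφ ^ (m - 2) := by
  have h1 : goldenφ ^ m = goldenφ ^ (m - 2) * goldenφ ^ (2 : ℤ) := by
    rw [← zpow_add₀ gold_ne]; ring_nf
  have h2 : goldenφ ^ (m - 1) = goldenφ ^ (m - 2) * goldenφ ^ (1 : ℤ) := by
    rw [← zpow_add₀ gold_ne]; ring_nf
  have h3 : goldenφ ^ (2 : ℤ) = goldenφ + 1 := by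
    rw [show (2 : ℤ) = (2 : ℕ) from rfl, zpow_natCast]; exact gold_sq
  rw [h1, h2, h3, zpow_one]
  ring

lemma gold_rec' (m : ℤ) : goldenφ ^ (m + 1) = goldenφ ^ m + goldenφ ^ (m - 1) := by
  have := gold_rec (m + 1)
  simpa [show m + 1 - 1 = m by ring, show m + 1 - 2 = m - 1 by ring] using this

lemma gold_double (m : ℤ) :
    2 * goldenφ ^ m = goldenφ ^ (m + 1) + goldenφ ^ (m - 2) := by
  have h1 := gold_rec' m
  have h2 := gold_rec m
  linarith

/-- no two consecutive elements -/
def NC (S : Finset ℤ) : Prop := ∀ k : ℤ, ¬(k ∈ S ∧ k + 1 ∈ S)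

lemma NC_mono {S T : Finset ℤ} (h : S ⊆ T) (hT : NC T) : NC S := by
  intro k hk
  exact hT k ⟨h hk.1, h hk.2⟩

noncomputable def val (S : Finset ℤ) : ℝ := ∑ k ∈ S, goldenφ ^ k

lemma val_nonneg (S : Finset ℤ) : 0 ≤ val S :=
  Finset.sum_nonneg fun k _ => le_of_lt (zpow_pos gold_pos k)

lemma val_erase {S : Finset ℤ} {t : ℤ} (ht : t ∈ S) :
    val S = goldenφ ^ t + val (S.erase t) := by
  unfold val
  rw [← Finset.add_sum_erase _ _ ht]

lemma le_val {S : Finset ℤ} {t : ℤ} (ht : t ∈ S) : goldenφ ^ t ≤ val S := by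
  rw [val_erase ht]
  have := val_nonneg (S.erase t)
  linarith

/-- A nonconsecutive set bounded above by u has value < φ^(u+1). -/
lemma val_bound : ∀ n : ℕ, ∀ S : Finset ℤ, S.card ≤ n → NC S →
    ∀ u : ℤ, (∀ k ∈ S, k ≤ u) → val S < goldenφ ^ (u + 1) := by
  intro n
  induction n with
  | zero =>
    intro S hc _ u _
    have : S = ∅ := Finset.card_eq_zero.mp (Nat.le_zero.mp hc)
    subst this
    simpa [val] using zpow_pos gold_pos (u + 1)
  | succ n ih =>
    intro S hc hNC u hbd
    rcases S.eq_empty_or_nonempty with rfl | hne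
    · simpa [val] using zpow_pos gold_pos (u + 1)
    · set t := S.max' hne with htdef
      have htS : t ∈ S := S.max'_mem hne
      have htu : t ≤ u := hbd t htS
      have hbd' : ∀ k ∈ S.erase t, k ≤ t - 2 := by
        intro k hk
        have hk1 : k ∈ S := Finset.mem_of_mem_erase hk
        have hkt : k ≤ t := S.le_max' k hk1
        have hne1 : k ≠ t := Finset.ne_of_mem_erase hk
        have hne2 : k ≠ t - 1 := by
          intro h
          apply hNC k
          exact ⟨hk1, by rw [h]; simpa using htS⟩
        omega
      have hcard : (S.erase t).card ≤ n := by
        have := Finset.card_erase_of_mem htS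
        omega
      have h1 : val (S.erase t) < goldenφ ^ (t - 1) := by
        have := ih (S.erase t) hcard (NC_mono (Finset.erase_subset _ _) hNC) (t - 2) hbd'
        simpa [show t - 2 + 1 = t - 1 by ring] using this
      have h2 : val S = goldenφ ^ t + val (S.erase t) := val_erase htS
      have h3 : goldenφ ^ t + goldenφ ^ (t - 1) = goldenφ ^ (t + 1) := (gold_rec' t).symm
      have h4 : goldenφ ^ (t + 1) ≤ goldenφ ^ (u + 1) :=
        zpow_le_zpow_right₀ (le_of_lt gold_gt_one) (by omega)
      linarith

/-- Adding φ^m to a nonconsecutive set bounded above by m+1. -/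
lemma add_bdd : ∀ n : ℕ, ∀ S : Finset ℤ, S.card ≤ n → NC S →
    ∀ m : ℤ, (∀ k ∈ S, k ≤ m + 1) →
    ∃ S' : Finset ℤ, NC S' ∧ val S' = goldenφ ^ m + val S := by
  intro n
  induction n using Nat.strong_induction_on with
  | _ n ih =>
  intro S hc hNC m hbd
  by_cases hm1 : m + 1 ∈ S
  · -- carry: φ^m + φ^(m+1) = φ^(m+2)
    have hpos : 0 < S.card := Finset.card_pos.mpr ⟨m + 1, hm1⟩
    have hlt : (S.erase (m + 1)).card < n := by
      have := Finset.card_erase_of_mem hm1; omega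
    have hbd' : ∀ k ∈ S.erase (m + 1), k ≤ m + 2 + 1 := by
      intro k hk; have := hbd k (Finset.mem_of_mem_erase hk); omega
    obtain ⟨S', hS'NC, hS'val⟩ := ih _ hlt (S.erase (m + 1)) le_rfl
      (NC_mono (Finset.erase_subset _ _) hNC) (m + 2) hbd'
    refine ⟨S', hS'NC, ?_⟩
    rw [hS'val, val_erase hm1]
    have h1 := gold_rec (m + 2)
    have : goldenφ ^ (m + 2) = goldenφ ^ (m + 1) + goldenφ ^ m := by
      simpa [show m + 2 - 1 = m + 1 by ring, show m + 2 - 2 = m by ring] using h1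
    linarith
  · by_cases hm : m ∈ S
    · -- 2φ^m = φ^(m+1) + φ^(m-2)
      have hlt : (S.erase m).card < n := by
        have := Finset.card_erase_of_mem hm
        have : 0 < S.card := Finset.card_pos.mpr ⟨m, hm⟩
        have := Finset.card_erase_of_mem hm; omega
      have hbd0 : ∀ k ∈ S.erase m, k ≤ m - 2 := by
        intro k hk
        have hk1 : k ∈ S := Finset.mem_of_mem_erase hk
        have hkm : k ≤ m + 1 := hbd k hk1
        have h1 : k ≠ m := Finset.ne_of_mem_erase hk
        have h2 : k ≠ m + 1 := by intro h; exact hm1 (h ▸ hk1)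
        have h3 : k ≠ m - 1 := by
          intro h
          exact hNC k ⟨hk1, by rw [h]; simpa [show m - 1 + 1 = m by ring] using hm⟩
        omega
      have hbd' : ∀ k ∈ S.erase m, k ≤ m - 2 + 1 := fun k hk => by
        have := hbd0 k hk; omega
      obtain ⟨S'', hNC'', hval''⟩ := ih _ hlt (S.erase m) le_rfl
        (NC_mono (Finset.erase_subset _ _) hNC) (m - 2) hbd'
      -- bound on elements of S''
      have hvb : val (S.erase m) < goldenφ ^ (m - 1) := by
        have := val_bound (S.erase m).card (S.erase m) le_rfl
          (NC_mono (Finset.erase_subset _ _) hNC) (m - 2) hbd0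
        simpa [show m - 2 + 1 = m - 1 by ring] using this
      have hS''lt : val S'' < goldenφ ^ m := by
        rw [hval'']
        have := gold_rec m
        linarith
      have hS''bd : ∀ k ∈ S'', k ≤ m - 1 := by
        intro k hk
        by_contra hcon
        push_neg at hcon
        have : goldenφ ^ m ≤ goldenφ ^ k :=
          zpow_le_zpow_right₀ (le_of_lt gold_gt_one) (by omega)
        have := le_val hk
        linarith
      have hm1nS'' : m + 1 ∉ S'' := fun h => by have := hS''bd _ h; omega
      refine ⟨insert (m + 1) S'', ?_, ?_⟩
      · intro k hk
        rcases hk with ⟨hk1, hk2⟩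
        rcases Finset.mem_insert.mp hk1 with h | h
        · rcases Finset.mem_insert.mp hk2 with h' | h'
          · omega
          · have := hS''bd _ h'; omega
        · rcases Finset.mem_insert.mp hk2 with h' | h'
          · have := hS''bd _ h; omega
          · exact hNC'' k ⟨h, h'⟩
      · rw [val, Finset.sum_insert hm1nS'']
        have : val S'' = ∑ k ∈ S'', goldenφ ^ k := rfl
        rw [← this, hval'', val_erase hm]
        have := gold_double m
        linarith
    · by_cases hm2 : m - 1 ∈ S
      · -- φ^m + φ^(m-1) = φ^(m+1)
        have hlt : (S.erase (m - 1)).card < n := by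
          have := Finset.card_erase_of_mem hm2
          have : 0 < S.card := Finset.card_pos.mpr ⟨m - 1, hm2⟩
          have := Finset.card_erase_of_mem hm2; omega
        have hbd' : ∀ k ∈ S.erase (m - 1), k ≤ m + 1 + 1 := by
          intro k hk; have := hbd k (Finset.mem_of_mem_erase hk); omega
        obtain ⟨S', hS'NC, hS'val⟩ := ih _ hlt (S.erase (m - 1)) le_rfl
          (NC_mono (Finset.erase_subset _ _) hNC) (m + 1) hbd'
        refine ⟨S', hS'NC, ?_⟩
        rw [hS'val, val_erase hm2]
        have := gold_rec' m
        linarith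
      · -- disjoint: just insert m
        refine ⟨insert m S, ?_, ?_⟩
        · intro k hk
          rcases hk with ⟨hk1, hk2⟩
          rcases Finset.mem_insert.mp hk1 with h | h
          · rcases Finset.mem_insert.mp hk2 with h' | h'
            · omega
            · subst h; exact hm1 h'
          · rcases Finset.mem_insert.mp hk2 with h' | h'
            · have : k = m - 1 := by omega
              exact hm2 (this ▸ h)
            · exact hNC k ⟨h, h'⟩
        · rw [val, Finset.sum_insert hm]
          rfl

/-- Adding φ^m to any nonconsecutive set. -/
lemma add_any : ∀ n : ℕ, ∀ (m : ℤ) (S : Finset ℤ),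
    (S.filter (fun k => m - 1 ≤ k)).card ≤ n → NC S →
    ∃ S' : Finset ℤ, NC S' ∧ val S' = goldenφ ^ m + val S := by
  intro n
  induction n using Nat.strong_induction_on with
  | _ n ih =>
  intro m S hc hNC
  by_cases hm1 : m + 1 ∈ S
  · have hmem : m + 1 ∈ S.filter (fun k => m - 1 ≤ k) := by
      simp [Finset.mem_filter, hm1]; omega
    have hpos : 0 < (S.filter (fun k => m - 1 ≤ k)).card := Finset.card_pos.mpr ⟨_, hmem⟩
    have hss : ((S.erase (m + 1)).filter (fun k => m + 2 - 1 ≤ k)) ⊂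
        S.filter (fun k => m - 1 ≤ k) := by
      constructor
      · intro k hk
        rw [Finset.mem_filter] at hk ⊢
        exact ⟨Finset.mem_of_mem_erase hk.1, by omega⟩
      · intro hsub
        have := hsub hmem
        rw [Finset.mem_filter] at this
        exact absurd this.1 (Finset.notMem_erase _ _)
    have hlt : ((S.erase (m + 1)).filter (fun k => m + 2 - 1 ≤ k)).card < n :=
      lt_of_lt_of_le (Finset.card_lt_card hss) hc
    obtain ⟨S', hS'NC, hS'val⟩ := ih _ hlt (m + 2) (S.erase (m + 1)) le_rfl
      (NC_mono (Finset.erase_subset _ _) hNC)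
    refine ⟨S', hS'NC, ?_⟩
    rw [hS'val, val_erase hm1]
    have h1 := gold_rec (m + 2)
    have : goldenφ ^ (m + 2) = goldenφ ^ (m + 1) + goldenφ ^ m := by
      simpa [show m + 2 - 1 = m + 1 by ring, show m + 2 - 2 = m by ring] using h1
    linarith
  · by_cases hm : m ∈ S
    · -- split into low and high parts
      set A := S.filter (fun k => k ≤ m - 2) with hA
      set B := S.filter (fun k => m + 2 ≤ k) with hB
      have hmm1 : m - 1 ∉ S := by
        intro h
        exact hNC (m - 1) ⟨h, by simpa [show m - 1 + 1 = m by ring] using hm⟩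
      have hAB : S.erase m = A ∪ B := by
        ext k
        simp only [Finset.mem_erase, Finset.mem_union, hA, hB, Finset.mem_filter]
        constructor
        · rintro ⟨hne, hk⟩
          have h1 : k ≠ m + 1 := fun h => hm1 (h ▸ hk)
          have h2 : k ≠ m - 1 := fun h => hmm1 (h ▸ hk)
          rcases lt_or_gt_of_ne hne with h | h
          · left; exact ⟨hk, by omega⟩
          · right; exact ⟨hk, by omega⟩
        · rintro (⟨hk, h⟩ | ⟨hk, h⟩) <;> exact ⟨by omega, hk⟩
      have hABdisj : Disjoint A B := by
        rw [Finset.disjoint_left]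
        intro k hkA hkB
        rw [hA, Finset.mem_filter] at hkA
        rw [hB, Finset.mem_filter] at hkB
        omega
      have hvAB : val (S.erase m) = val A + val B := by
        rw [hAB, val, Finset.sum_union hABdisj]; rfl
      have hAsub : A ⊆ S := Finset.filter_subset _ _
      have hBsub : B ⊆ S := Finset.filter_subset _ _
      have hAbd : ∀ k ∈ A, k ≤ m - 2 := fun k hk => (Finset.mem_filter.mp hk).2
      obtain ⟨A', hA'NC, hA'val⟩ := add_bdd A.card A le_rfl (NC_mono hAsub hNC)
        (m - 2) (fun k hk => by have := hAbd k hk; omega)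
      have hvA : val A < goldenφ ^ (m - 1) := by
        have := val_bound A.card A le_rfl (NC_mono hAsub hNC) (m - 2) hAbd
        simpa [show m - 2 + 1 = m - 1 by ring] using this
      have hA'lt : val A' < goldenφ ^ m := by
        rw [hA'val]
        have := gold_rec m
        linarith
      have hA'bd : ∀ k ∈ A', k ≤ m - 1 := by
        intro k hk
        by_contra hcon
        push_neg at hcon
        have : goldenφ ^ m ≤ goldenφ ^ k :=
          zpow_le_zpow_right₀ (le_of_lt gold_gt_one) (by omega)
        have := le_val hk
        linarith
      have hBbd : ∀ k ∈ B, m + 2 ≤ k := fun k hk => (Finset.mem_filter.mp hk).2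
      have hCdisj : Disjoint A' B := by
        rw [Finset.disjoint_left]
        intro k hkA hkB
        have := hA'bd k hkA
        have := hBbd k hkB
        omega
      have hCNC : NC (A' ∪ B) := by
        intro k hk
        rcases hk with ⟨hk1, hk2⟩
        rcases Finset.mem_union.mp hk1 with h | h <;>
          rcases Finset.mem_union.mp hk2 with h' | h'
        · exact hA'NC k ⟨h, h'⟩
        · have := hA'bd k h; have := hBbd _ h'; omega
        · have := hBbd k h; have := hA'bd _ h'; omega
        · exact hNC k ⟨hBsub h, hBsub h'⟩
      -- measure for recursive call
      have hmmem : m ∈ S.filter (fun k => m - 1 ≤ k) := by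
        simp [Finset.mem_filter, hm]
      have hfiltereq : (A' ∪ B).filter (fun k => m + 1 - 1 ≤ k) = B := by
        ext k
        simp only [Finset.mem_filter, Finset.mem_union]
        constructor
        · rintro ⟨h | h, hk⟩
          · have := hA'bd k h; omega
          · exact h
        · intro h
          exact ⟨Or.inr h, by have := hBbd k h; omega⟩
      have hss : B ⊂ S.filter (fun k => m - 1 ≤ k) := by
        constructor
        · intro k hk
          rw [Finset.mem_filter]
          exact ⟨hBsub hk, by have := hBbd k hk; omega⟩
        · intro hsub
          have := hsub hmmem
          rw [hB, Finset.mem_filter] at this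
          omega
      have hlt : ((A' ∪ B).filter (fun k => m + 1 - 1 ≤ k)).card < n := by
        rw [hfiltereq]
        exact lt_of_lt_of_le (Finset.card_lt_card hss) hc
      obtain ⟨S', hS'NC, hS'val⟩ := ih _ hlt (m + 1) (A' ∪ B) le_rfl hCNC
      refine ⟨S', hS'NC, ?_⟩
      rw [hS'val]
      have hCval : val (A' ∪ B) = val A' + val B := by
        rw [val, Finset.sum_union hCdisj]; rfl
      rw [hCval, hA'val, val_erase hm]
      have := gold_double m
      linarith
    · by_cases hm2 : m - 1 ∈ S
      · have hmem : m - 1 ∈ S.filter (fun k => m - 1 ≤ k) := by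
          simp [Finset.mem_filter, hm2]
        have hss : ((S.erase (m - 1)).filter (fun k => m + 1 - 1 ≤ k)) ⊂
            S.filter (fun k => m - 1 ≤ k) := by
          constructor
          · intro k hk
            rw [Finset.mem_filter] at hk ⊢
            exact ⟨Finset.mem_of_mem_erase hk.1, by omega⟩
          · intro hsub
            have := hsub hmem
            rw [Finset.mem_filter] at this
            have := this.2
            omega
        have hlt : ((S.erase (m - 1)).filter (fun k => m + 1 - 1 ≤ k)).card < n :=
          lt_of_lt_of_le (Finset.card_lt_card hss) hc
        obtain ⟨S', hS'NC, hS'val⟩ := ih _ hlt (m + 1) (S.erase (m - 1)) le_rfl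
          (NC_mono (Finset.erase_subset _ _) hNC)
        refine ⟨S', hS'NC, ?_⟩
        rw [hS'val, val_erase hm2]
        have := gold_rec' m
        linarith
      · refine ⟨insert m S, ?_, ?_⟩
        · intro k hk
          rcases hk with ⟨hk1, hk2⟩
          rcases Finset.mem_insert.mp hk1 with h | h
          · rcases Finset.mem_insert.mp hk2 with h' | h'
            · omega
            · subst h; exact hm1 h'
          · rcases Finset.mem_insert.mp hk2 with h' | h'
            · have : k = m - 1 := by omega
              exact hm2 (this ▸ h)
            · exact hNC k ⟨h, h'⟩
        · rw [val, Finset.sum_insert hm]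
          rfl

lemma nat_expansion : ∀ n : ℕ, 1 ≤ n → ∃ S : Finset ℤ, NC S ∧ val S = n := by
  intro n
  induction n with
  | zero => intro h; omega
  | succ n ih =>
    intro _
    by_cases hn : 1 ≤ n
    · obtain ⟨S, hNC, hval⟩ := ih hn
      obtain ⟨S', hS'NC, hS'val⟩ := add_any (S.filter (fun k => (0:ℤ) - 1 ≤ k)).card 0 S le_rfl hNC
      refine ⟨S', hS'NC, ?_⟩
      rw [hS'val, hval, zpow_zero]
      push_cast
      ring
    · have : n = 0 := by omega
      subst this
      refine ⟨{0}, ?_, ?_⟩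
      · intro k hk
        rcases hk with ⟨hk1, hk2⟩
        simp at hk1 hk2
        omega
      · simp [val]

end GoldenAux

/-- Every positive integer has a finite greedy φ-expansion: digits in {0,1},
no two consecutive digits equal to 1, n = Σ_{k=-R}^{L} ε_k φ^k. -/
theorem golden_finite_expansion (n : ℕ) (hn : 0 < n) :
    ∃ (L R : ℕ) (ε : ℤ → ℕ),
      (∀ k, ε k ≤ 1) ∧
      (∀ k, ¬(ε k = 1 ∧ ε (k + 1) = 1)) ∧
      (n : ℝ) = ∑ k ∈ Finset.Icc (-(R : ℤ)) (L : ℤ), (ε k : ℝ) * goldenφ ^ k := by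
  obtain ⟨S, hNC, hval⟩ := GoldenAux.nat_expansion n hn
  classical
  set T : Finset ℤ := insert 0 S with hT
  have hTne : T.Nonempty := ⟨0, Finset.mem_insert_self _ _⟩
  set L : ℕ := (T.max' hTne).toNat with hL
  set R : ℕ := (-(T.min' hTne)).toNat with hR
  refine ⟨L, R, fun k => if k ∈ S then 1 else 0, ?_, ?_, ?_⟩
  · intro k; by_cases h : k ∈ S <;> simp [h]
  · intro k ⟨h1, h2⟩
    have hk1 : k ∈ S := by by_contra h; simp [h] at h1
    have hk2 : k + 1 ∈ S := by by_contra h; simp [h] at h2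
    exact hNC k ⟨hk1, hk2⟩
  · have hsub : S ⊆ Finset.Icc (-(R : ℤ)) (L : ℤ) := by
      intro k hk
      have hkT : k ∈ T := Finset.mem_insert_of_mem hk
      have h1 : k ≤ T.max' hTne := T.le_max' k hkT
      have h2 : T.min' hTne ≤ k := T.min'_le k hkT
      rw [Finset.mem_Icc]
      constructor
      · have : -(T.min' hTne) ≤ ((-(T.min' hTne)).toNat : ℤ) := Int.self_le_toNat _
        rw [hR]; omega
      · have : T.max' hTne ≤ ((T.max' hTne).toNat : ℤ) := Int.self_le_toNat _
        rw [hL]; omega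
    rw [← hval]
    have e : ∀ k ∈ Finset.Icc (-(R : ℤ)) (L : ℤ),
        (((fun k => if k ∈ S then (1:ℕ) else 0) k : ℕ) : ℝ) * goldenφ ^ k
          = if k ∈ S then goldenφ ^ k else 0 := by
      intro k _
      by_cases h : k ∈ S <;> simp [h]
    rw [Finset.sum_congr rfl e, Finset.sum_ite_mem,
      Finset.inter_eq_right.mpr hsub]
    rfl
end
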